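/- Let {(N_k,B_k)}_{k=1}^∞ satisfy N_k ≥ #B_k ≥ 2 for all k, with B_k ⊆ ℤ finite, and suppose the infinite convolution μ of {(N_k,B_k)} exists and the family {ν_{>k}}_{k=1}^∞ is tight. Then the zero set of μ̂ satisfies Z(μ̂) = ⋃_{k=1}^∞ N_1N_2⋯N_k · Z(M_{B_k}). -/

import Mathlib

open MeasureTheory Filter Topology Complex Polynomial

/-- The exponential function `e_l(x) = e^{-2πi l x}`. -/
noncomputable def expFun (l x : ℝ) : ℂ :=
  Complex.exp (((-2 * Real.pi * l * x : ℝ) : ℂ) * Complex.I)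

/-- The Fourier transform `μ̂(ξ) = ∫ e^{-2πiξx} dμ(x)` of a measure on `ℝ`. -/
noncomputable def ft (μ : Measure ℝ) (ξ : ℝ) : ℂ := ∫ x, expFun ξ x ∂μ

/-- `Λ` is an orthogonal (orthonormal) set for `μ`: the exponentials `e_λ`, `λ ∈ Λ`, form an
orthonormal family in `L²(μ)`. -/
def IsOrthoSet (μ : Measure ℝ) (Λ : Set ℝ) : Prop :=
  ∀ l₁ ∈ Λ, ∀ l₂ ∈ Λ,
    (∫ x, (starRingEnd ℂ) (expFun l₁ x) * expFun l₂ x ∂μ) = if l₁ = l₂ then 1 else 0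

/-- `(μ, Λ)` is a spectral pair: the exponentials `{e_λ : λ ∈ Λ}` form an orthonormal family
which is maximal (total) in `L²(μ)`, i.e. an orthonormal basis of `L²(μ)`. -/
def IsSpectralPair (μ : Measure ℝ) (Λ : Set ℝ) : Prop :=
  IsOrthoSet μ Λ ∧
  ∀ f : ℝ → ℂ, MemLp f 2 μ →
    (∀ l ∈ Λ, (∫ x, (starRingEnd ℂ) (expFun l x) * f x ∂μ) = 0) → f =ᵐ[μ] 0

/-- `μ` is a spectral measure: some countable `Λ ⊆ ℝ` is a spectrum of `μ`. -/
def IsSpectralMeasure (μ : Measure ℝ) : Prop :=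
  ∃ Λ : Set ℝ, Λ.Countable ∧ IsSpectralPair μ Λ

/-- The uniform probability measure `δ_A` on a finite set `A ⊆ ℝ`. -/
noncomputable def uniformD (A : Finset ℝ) : Measure ℝ :=
  (A.card : ENNReal)⁻¹ • ∑ a ∈ A, Measure.dirac a

/-- The measure `δ_{c⁻¹ B}` for a finite set `B ⊆ ℤ` and a scaling factor `c`. -/
noncomputable def scaledB (B : Finset ℤ) (c : ℝ) : Measure ℝ :=
  uniformD (B.image fun b : ℤ => (b : ℝ) / c)

/-- The finite convolutions `μ_k = δ_{N₁⁻¹B₁} ∗ δ_{(N₁N₂)⁻¹B₂} ∗ ⋯ ∗ δ_{(N₁⋯N_k)⁻¹B_k}`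
(the sequences are indexed starting from `k = 1`; `μ_0 = δ_0`). -/
noncomputable def partialConv (N : ℕ → ℕ) (B : ℕ → Finset ℤ) : ℕ → Measure ℝ
  | 0 => Measure.dirac 0
  | k + 1 =>
      MeasureTheory.Measure.conv (partialConv N B k)
        (scaledB (B (k + 1)) (∏ i ∈ Finset.Icc 1 (k + 1), (N i : ℝ)))

/-- `μ` is the infinite convolution of `{(N_k, B_k)}_{k=1}^∞`: it is a Borel probability
measure and the finite convolutions `μ_k` converge weakly to `μ`. -/
def IsInfiniteConv (N : ℕ → ℕ) (B : ℕ → Finset ℤ) (μ : Measure ℝ) : Prop :=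
  IsProbabilityMeasure μ ∧
    ∀ f : BoundedContinuousFunction ℝ ℝ,
      Tendsto (fun k => ∫ x, f x ∂(partialConv N B k)) atTop (𝓝 (∫ x, f x ∂μ))

/-- `ν` is the tail infinite convolution `ν_{>k} = δ_{N_{k+1}⁻¹B_{k+1}} ∗ ⋯`. -/
def IsNuGt (N : ℕ → ℕ) (B : ℕ → Finset ℤ) (k : ℕ) (ν : Measure ℝ) : Prop :=
  IsInfiniteConv (fun j => N (k + j)) (fun j => B (k + j)) ν

/-- A family of measures is tight. -/
def IsTightFamily {ι : Type*} (Φ : ι → Measure ℝ) : Prop :=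
  ∀ ε : ENNReal, 0 < ε → ∃ K : Set ℝ, IsCompact K ∧ ∀ i, 1 - ε < Φ i K

/-- `B` is a complete residue system modulo `M`: each residue class modulo `M` contains
exactly one element of `B`. -/
def IsCRS (B : Finset ℤ) (M : ℕ) : Prop :=
  ∀ r : ZMod M, ∃! b : ℤ, b ∈ B ∧ ((b : ZMod M) = r)

/-- `∑_{b ∈ B} x^{b - b⁎}` where `b⁎ = min B`, i.e. `x^{-b⁎} ∑_{b ∈ B} x^b`. -/
noncomputable def numerPoly (B : Finset ℤ) : Polynomial ℤ :=
  ∑ b ∈ B, Polynomial.X ^ (b - (B.min.untopD 0)).toNat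

/-- `∑_{k=0}^{n-1} x^k`. -/
noncomputable def geomPoly (n : ℕ) : Polynomial ℤ :=
  ∑ k ∈ Finset.range n, Polynomial.X ^ k

/-- The character polynomial `f_B(x) = (∑_{b∈B} x^b)/(x^{b⁎} ∑_{k=0}^{#B-1} x^k)`,
obtained by dividing by the monic polynomial `∑_{k=0}^{#B-1} x^k`. -/
noncomputable def charPoly (B : Finset ℤ) : Polynomial ℤ :=
  numerPoly B /ₘ geomPoly B.card

/-- `B` (a complete residue system modulo `M`) satisfies the uniform discrete zero
condition: `Z(f_B ∘ e^{-2πix}) ⊆ {j/M : j ∈ ℤ ∖ Mℤ}`. -/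
def SatisfiesUDZ (B : Finset ℤ) (M : ℕ) : Prop :=
  {x : ℝ | Polynomial.aeval (expFun x 1) (charPoly B) = 0} ⊆
    {x : ℝ | ∃ j : ℤ, ¬ ((M : ℤ) ∣ j) ∧ x = (j : ℝ) / M}

/-- `M_B(ξ) = (1/#B) ∑_{b∈B} e^{-2πibξ}`, the Fourier transform of `δ_B`. -/
noncomputable def MB (B : Finset ℤ) (ξ : ℝ) : ℂ :=
  (B.card : ℂ)⁻¹ * ∑ b ∈ B, expFun (b : ℝ) ξ

/-- `Q_{μ,Λ}(ξ) = ∑_{λ ∈ Λ} |μ̂(ξ+λ)|²`. -/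
noncomputable def Qf (μ : Measure ℝ) (Λ : Set ℝ) (ξ : ℝ) : ℝ :=
  ∑' l : Λ, ‖ft μ (ξ + (l : ℝ))‖ ^ 2

lemma continuous_expFun (l : ℝ) : Continuous (expFun l) := by
  unfold expFun; fun_prop

lemma norm_expFun (l x : ℝ) : ‖expFun l x‖ = 1 := by
  simp [expFun, Complex.norm_exp]

lemma expFun_add (l x y : ℝ) : expFun l (x + y) = expFun l x * expFun l y := by
  rw [expFun, expFun, expFun, ← Complex.exp_add]
  congr 1
  push_cast
  ring

lemma norm_exp_I_sub_one (θ : ℝ) : ‖Complex.exp ((θ:ℂ) * Complex.I) - 1‖ ≤ |θ| := by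
  have hre : (Complex.exp ((θ:ℂ) * Complex.I) - 1).re = Real.cos θ - 1 := by
    simp [Complex.exp_ofReal_mul_I_re]
  have him : (Complex.exp ((θ:ℂ) * Complex.I) - 1).im = Real.sin θ := by
    simp [Complex.exp_ofReal_mul_I_im]
  rw [Complex.norm_def, Complex.normSq_apply, hre, him]
  rw [← Real.sqrt_sq_eq_abs]
  apply Real.sqrt_le_sqrt
  nlinarith [Real.one_sub_sq_div_two_le_cos (x := θ), Real.sin_sq_add_cos_sq θ]

lemma integrable_bdd {E : Type*} [NormedAddCommGroup E] {f : ℝ → E} (μ : Measure ℝ)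
    [IsFiniteMeasure μ] (hf : Continuous f) {C : ℝ} (h : ∀ x, ‖f x‖ ≤ C) : Integrable f μ :=
  (integrable_const C).mono' hf.aestronglyMeasurable (.of_forall h)

lemma integrable_expFun (μ : Measure ℝ) [IsFiniteMeasure μ] (l : ℝ) :
    Integrable (expFun l) μ :=
  integrable_bdd μ (continuous_expFun l) (fun x => (norm_expFun l x).le)

lemma ft_uniformD (A : Finset ℝ) (ξ : ℝ) :
    ft (uniformD A) ξ = (A.card : ℂ)⁻¹ * ∑ a ∈ A, expFun ξ a := by
  rw [ft, uniformD, integral_smul_measure, integral_finset_sum_measure]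
  · simp only [integral_dirac' _ _ (continuous_expFun ξ).stronglyMeasurable]
    rw [ENNReal.toReal_inv, ENNReal.toReal_natCast]
    rw [Complex.real_smul]
    push_cast
    ring
  · exact fun i _ => integrable_expFun _ ξ

lemma isProbabilityMeasure_uniformD {A : Finset ℝ} (hA : A.Nonempty) :
    IsProbabilityMeasure (uniformD A) := by
  constructor
  rw [uniformD, Measure.smul_apply, Measure.finset_sum_apply]
  simp only [Measure.dirac_apply_of_mem (Set.mem_univ _)]
  rw [Finset.sum_const, nsmul_eq_mul, mul_one, smul_eq_mul, ENNReal.inv_mul_cancel]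
  · exact_mod_cast (Nat.cast_ne_zero (R := ENNReal)).mpr (Finset.card_pos.mpr hA).ne'
  · exact ENNReal.natCast_ne_top _

lemma isProbabilityMeasure_scaledB {B : Finset ℤ} (hB : B.Nonempty) (c : ℝ) :
    IsProbabilityMeasure (scaledB B c) :=
  isProbabilityMeasure_uniformD (hB.image _)

lemma ft_scaledB {B : Finset ℤ} {c : ℝ} (hc : c ≠ 0) (ξ : ℝ) :
    ft (scaledB B c) ξ = MB B (ξ / c) := by
  rw [scaledB, ft_uniformD, MB]
  have hinj : Set.InjOn (fun b : ℤ => (b : ℝ) / c) B := by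
    intro a _ b _ h
    simp only [div_eq_div_iff hc hc] at h
    exact_mod_cast mul_right_cancel₀ hc h
  rw [Finset.card_image_of_injOn hinj, Finset.sum_image hinj]
  congr 1
  apply Finset.sum_congr rfl
  intro b _
  unfold expFun
  have h : (-2*Real.pi*ξ*((b:ℝ)/c) : ℝ) = (-2*Real.pi*(b:ℝ)*(ξ/c) : ℝ) := by ring
  rw [h]

lemma ft_conv (μ ν : Measure ℝ) [IsProbabilityMeasure μ] [IsProbabilityMeasure ν] (ξ : ℝ) :
    ft (μ.conv ν) ξ = ft μ ξ * ft ν ξ := by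
  rw [ft, Measure.conv,
    integral_map (by fun_prop) (continuous_expFun ξ).aestronglyMeasurable]
  simp_rw [expFun_add]
  exact integral_prod_mul (expFun ξ) (expFun ξ)

lemma isProbabilityMeasure_partialConv (N : ℕ → ℕ) (B : ℕ → Finset ℤ)
    (hB : ∀ k ≥ 1, (B k).Nonempty) :
    ∀ n, IsProbabilityMeasure (partialConv N B n) := by
  intro n
  induction n with
  | zero => rw [partialConv]; infer_instance
  | succ k ih =>
    rw [partialConv]
    haveI := ih
    haveI := isProbabilityMeasure_scaledB (hB (k+1) (Nat.le_add_left 1 k))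
      (∏ i ∈ Finset.Icc 1 (k + 1), (N i : ℝ))
    infer_instance

lemma ft_partialConv (N : ℕ → ℕ) (B : ℕ → Finset ℤ)
    (hB : ∀ k ≥ 1, (B k).Nonempty) (hN : ∀ k ≥ 1, 1 ≤ N k) (ξ : ℝ) :
    ∀ n, ft (partialConv N B n) ξ =
      ∏ j ∈ Finset.Icc 1 n, MB (B j) (ξ / ∏ i ∈ Finset.Icc 1 j, (N i : ℝ)) := by
  intro n
  induction n with
  | zero =>
    rw [partialConv]
    simp [ft, expFun, integral_dirac' _ _ (continuous_expFun ξ).stronglyMeasurable]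
  | succ k ih =>
    haveI := isProbabilityMeasure_partialConv N B hB k
    have hcpos : (0:ℝ) < ∏ i ∈ Finset.Icc 1 (k+1), (N i : ℝ) := by
      apply Finset.prod_pos
      intro i hi
      exact_mod_cast hN i (Finset.mem_Icc.mp hi).1
    haveI := isProbabilityMeasure_scaledB (hB (k+1) (Nat.le_add_left 1 k))
      (∏ i ∈ Finset.Icc 1 (k + 1), (N i : ℝ))
    rw [partialConv, ft_conv, ih, ft_scaledB hcpos.ne',
      show (∏ j ∈ Finset.Icc 1 (k+1), MB (B j) (ξ / ∏ i ∈ Finset.Icc 1 j, (N i:ℝ)))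
        = (∏ j ∈ Finset.Icc 1 k, MB (B j) (ξ / ∏ i ∈ Finset.Icc 1 j, (N i:ℝ)))
          * MB (B (k+1)) (ξ / ∏ i ∈ Finset.Icc 1 (k+1), (N i:ℝ))
      from Finset.prod_Icc_succ_top (Nat.le_add_left 1 k) _]

noncomputable def cosBF (ξ : ℝ) : BoundedContinuousFunction ℝ ℝ :=
  ⟨⟨fun x => Real.cos (-2 * Real.pi * ξ * x), by fun_prop⟩, ⟨2, fun x y => by
    rw [Real.dist_eq, abs_sub_le_iff]
    constructor <;>
      nlinarith [Real.cos_le_one (-2*Real.pi*ξ*x), Real.neg_one_le_cos (-2*Real.pi*ξ*x),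
        Real.cos_le_one (-2*Real.pi*ξ*y), Real.neg_one_le_cos (-2*Real.pi*ξ*y)]⟩⟩

noncomputable def sinBF (ξ : ℝ) : BoundedContinuousFunction ℝ ℝ :=
  ⟨⟨fun x => Real.sin (-2 * Real.pi * ξ * x), by fun_prop⟩, ⟨2, fun x y => by
    rw [Real.dist_eq, abs_sub_le_iff]
    constructor <;>
      nlinarith [Real.sin_le_one (-2*Real.pi*ξ*x), Real.neg_one_le_sin (-2*Real.pi*ξ*x),
        Real.sin_le_one (-2*Real.pi*ξ*y), Real.neg_one_le_sin (-2*Real.pi*ξ*y)]⟩⟩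

lemma ft_eq_cos_sin (μ : Measure ℝ) [IsFiniteMeasure μ] (ξ : ℝ) :
    ft μ ξ = ((∫ x, cosBF ξ x ∂μ : ℝ) : ℂ) + ((∫ x, sinBF ξ x ∂μ : ℝ) : ℂ) * Complex.I := by
  have hcc : ∀ x : ℝ, cosBF ξ x = Real.cos (-2 * Real.pi * ξ * x) := fun _ => rfl
  have hss : ∀ x : ℝ, sinBF ξ x = Real.sin (-2 * Real.pi * ξ * x) := fun _ => rfl
  have hexp : ∀ x : ℝ, expFun ξ x
      = ((cosBF ξ x : ℝ) : ℂ) + ((sinBF ξ x : ℝ) : ℂ) * Complex.I := by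
    intro x
    rw [expFun, Complex.exp_mul_I, hcc, hss, Complex.ofReal_cos, Complex.ofReal_sin]
  have hci : Integrable (fun x => ((cosBF ξ x : ℝ) : ℂ)) μ :=
    integrable_bdd μ (by have := (cosBF ξ).continuous; fun_prop) (C := 1)
      (fun x => by
        rw [Complex.norm_real, Real.norm_eq_abs, hcc]
        exact Real.abs_cos_le_one _)
  have hsi : Integrable (fun x => ((sinBF ξ x : ℝ) : ℂ) * Complex.I) μ := by
    apply integrable_bdd μ (by have := (sinBF ξ).continuous; fun_prop) (C := 1)
    intro x
    rw [norm_mul, Complex.norm_I, mul_one, Complex.norm_real, Real.norm_eq_abs, hss]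
    exact Real.abs_sin_le_one _
  have h1 : ∫ a, ((cosBF ξ a : ℝ) : ℂ) ∂μ = ((∫ x, cosBF ξ x ∂μ : ℝ) : ℂ) := by
    simp_rw [← Complex.ofRealCLM_apply]
    exact ContinuousLinearMap.integral_comp_comm _ ((cosBF ξ).integrable μ)
  have h2 : ∫ a, ((sinBF ξ a : ℝ) : ℂ) ∂μ = ((∫ x, sinBF ξ x ∂μ : ℝ) : ℂ) := by
    simp_rw [← Complex.ofRealCLM_apply]
    exact ContinuousLinearMap.integral_comp_comm _ ((sinBF ξ).integrable μ)
  rw [ft]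
  simp_rw [hexp]
  rw [integral_add hci hsi, integral_mul_const, h1, h2]

lemma tendsto_ft (N : ℕ → ℕ) (B : ℕ → Finset ℤ) (μ : Measure ℝ)
    (hB : ∀ k ≥ 1, (B k).Nonempty) (hμ : IsInfiniteConv N B μ) (ξ : ℝ) :
    Tendsto (fun n => ft (partialConv N B n) ξ) atTop (𝓝 (ft μ ξ)) := by
  haveI := hμ.1
  have hcos := hμ.2 (cosBF ξ)
  have hsin := hμ.2 (sinBF ξ)
  have h : Tendsto (fun n => ((∫ x, cosBF ξ x ∂(partialConv N B n) : ℝ) : ℂ)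
      + ((∫ x, sinBF ξ x ∂(partialConv N B n) : ℝ) : ℂ) * Complex.I) atTop
      (𝓝 (((∫ x, cosBF ξ x ∂μ : ℝ) : ℂ) + ((∫ x, sinBF ξ x ∂μ : ℝ) : ℂ) * Complex.I)) :=
    ((Complex.continuous_ofReal.tendsto _).comp hcos).add
      (((Complex.continuous_ofReal.tendsto _).comp hsin).mul_const Complex.I)
  have heq : (fun n => ft (partialConv N B n) ξ)
      = fun n => ((∫ x, cosBF ξ x ∂(partialConv N B n) : ℝ) : ℂ)
        + ((∫ x, sinBF ξ x ∂(partialConv N B n) : ℝ) : ℂ) * Complex.I := by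
    funext n
    haveI := isProbabilityMeasure_partialConv N B hB n
    exact ft_eq_cos_sin _ ξ
  rw [heq, ft_eq_cos_sin μ ξ]
  exact h

lemma norm_ft_sub_one_le (ν : Measure ℝ) [IsProbabilityMeasure ν] (η R : ℝ) (hR : 0 ≤ R) :
    ‖ft ν η - 1‖ ≤ 2 * Real.pi * |η| * R + 2 * (ν (Set.Icc (-R) R)ᶜ).toReal := by
  have hint : Integrable (fun x => expFun η x - 1) ν :=
    (integrable_expFun ν η).sub (integrable_const 1)
  have h0 : ft ν η - 1 = ∫ x, (expFun η x - 1) ∂ν := by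
    rw [integral_sub (integrable_expFun ν η) (integrable_const 1), ft, integral_const,
      probReal_univ, one_smul]
  have hK : ‖∫ x in Set.Icc (-R) R, (expFun η x - 1) ∂ν‖
      ≤ (2 * Real.pi * |η| * R) * (ν (Set.Icc (-R) R)).toReal := by
    apply norm_setIntegral_le_of_norm_le_const (measure_lt_top _ _) _
    intro x hx
    have h1 : expFun η x - 1 = Complex.exp (((-2*Real.pi*η*x : ℝ) : ℂ) * Complex.I) - 1 := rfl
    rw [h1]
    refine (norm_exp_I_sub_one _).trans ?_
    have hxR : |x| ≤ R := abs_le.mpr ⟨(Set.mem_Icc.mp hx).1, (Set.mem_Icc.mp hx).2⟩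
    calc |(-2*Real.pi*η*x : ℝ)| = 2 * Real.pi * |η| * |x| := by
          rw [abs_mul, abs_mul, abs_mul, abs_neg]
          rw [_root_.abs_of_nonneg (by norm_num : (0:ℝ) ≤ 2),
            _root_.abs_of_nonneg Real.pi_pos.le]
      _ ≤ 2 * Real.pi * |η| * R := by
          apply mul_le_mul_of_nonneg_left hxR
          positivity
  have hKc : ‖∫ x in (Set.Icc (-R) R)ᶜ, (expFun η x - 1) ∂ν‖
      ≤ 2 * (ν (Set.Icc (-R) R)ᶜ).toReal := by
    apply norm_setIntegral_le_of_norm_le_const (measure_lt_top _ _) _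
    intro x _
    calc ‖expFun η x - 1‖ ≤ ‖expFun η x‖ + ‖(1:ℂ)‖ := norm_sub_le _ _
      _ = 2 := by rw [norm_expFun, norm_one]; norm_num
  have hν1 : (ν (Set.Icc (-R) R)).toReal ≤ 1 := by
    rw [← ENNReal.toReal_one]
    exact ENNReal.toReal_mono ENNReal.one_ne_top prob_le_one
  rw [h0, ← integral_add_compl measurableSet_Icc hint]
  refine (norm_add_le _ _).trans (add_le_add (hK.trans ?_) hKc)
  calc (2 * Real.pi * |η| * R) * (ν (Set.Icc (-R) R)).toReal
      ≤ (2 * Real.pi * |η| * R) * 1 := by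
        apply mul_le_mul_of_nonneg_left hν1
        positivity
    _ = 2 * Real.pi * |η| * R := mul_one _

lemma exists_bound_of_tight (ν : ℕ → Measure ℝ) (hprob : ∀ k, IsProbabilityMeasure (ν (k+1)))
    (htight : IsTightFamily fun k => ν (k+1)) {ε : ℝ} (hε : 0 < ε) :
    ∃ R : ℝ, 0 ≤ R ∧ ∀ k, ((ν (k+1)) (Set.Icc (-R) R)ᶜ).toReal ≤ ε := by
  obtain ⟨K, hK, hKb⟩ := htight (ENNReal.ofReal ε) (by simp [hε])
  obtain ⟨r, hr⟩ := hK.isBounded.subset_closedBall 0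
  refine ⟨max r 0, le_max_right _ _, fun k => ?_⟩
  haveI := hprob k
  have hsub : K ⊆ Set.Icc (-(max r 0)) (max r 0) := by
    intro x hx
    have h1 := hr hx
    rw [Metric.mem_closedBall, Real.dist_eq, sub_zero] at h1
    exact Set.mem_Icc.mpr (abs_le.mp (h1.trans (le_max_left r 0)))
  have h1 : (ν (k+1)) (Set.Icc (-(max r 0)) (max r 0))ᶜ ≤ (ν (k+1)) Kᶜ :=
    measure_mono (Set.compl_subset_compl.mpr hsub)
  have h2 : (ν (k+1)) Kᶜ ≤ ENNReal.ofReal ε := by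
    rw [prob_compl_eq_one_sub hK.measurableSet, tsub_le_iff_right]
    calc (1:ENNReal) ≤ 1 - ENNReal.ofReal ε + ENNReal.ofReal ε := le_tsub_add
      _ ≤ (ν (k+1)) K + ENNReal.ofReal ε := add_le_add_left (hKb k).le _
      _ = ENNReal.ofReal ε + (ν (k+1)) K := add_comm _ _
  exact ENNReal.toReal_le_of_le_ofReal hε.le (h1.trans h2)

lemma tendsto_ft_tail (ν : ℕ → Measure ℝ) (hprob : ∀ k, IsProbabilityMeasure (ν (k+1)))
    (htight : IsTightFamily fun k => ν (k+1)) (c : ℕ → ℝ)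
    (hcge : ∀ k, (2:ℝ)^k ≤ c k) (hcpos : ∀ k, 0 < c k) (ξ : ℝ) :
    Tendsto (fun k => ft (ν (k+1)) (ξ / c (k+1))) atTop (𝓝 1) := by
  rw [Metric.tendsto_atTop]
  intro ε hε
  obtain ⟨R, hR0, hRb⟩ := exists_bound_of_tight ν hprob htight (show (0:ℝ) < ε/4 by linarith)
  set M := 2 * Real.pi * |ξ| * R with hM
  have hM0 : 0 ≤ M := by positivity
  obtain ⟨n0, hn0⟩ := pow_unbounded_of_one_lt (2*M/ε) (by norm_num : (1:ℝ) < 2)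
  refine ⟨n0, fun k hk => ?_⟩
  haveI := hprob k
  rw [dist_eq_norm]
  have hb := norm_ft_sub_one_le (ν (k+1)) (ξ / c (k+1)) R hR0
  have hck : 0 < c (k+1) := hcpos (k+1)
  have habs : 2 * Real.pi * |ξ / c (k+1)| * R = M / c (k+1) := by
    rw [abs_div, _root_.abs_of_pos hck, hM]
    ring
  have hpow : (2:ℝ)^n0 ≤ c (k+1) := by
    refine le_trans ?_ (hcge (k+1))
    exact pow_le_pow_right₀ (by norm_num) (by omega)
  have h2n : (0:ℝ) < 2^n0 := by positivity
  have hMc : M / c (k+1) ≤ M / 2^n0 :=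
    by gcongr
  have hM2 : M / 2^n0 < ε/2 := by
    rw [div_lt_iff₀ h2n] at *
    rw [div_lt_iff₀ hε] at hn0
    nlinarith
  have htr : (((ν (k+1)) (Set.Icc (-R) R)ᶜ).toReal : ℝ) ≤ ε/4 := hRb k
  rw [habs] at hb
  linarith

lemma prod_Icc_add' {M : Type*} [CommMonoid M] (g : ℕ → M) (m : ℕ) :
    ∀ n, ∏ j ∈ Finset.Icc 1 (m+n), g j
      = (∏ j ∈ Finset.Icc 1 m, g j) * ∏ j ∈ Finset.Icc 1 n, g (m+j) := by
  intro n
  induction n with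
  | zero => simp
  | succ n ih =>
    rw [show m + (n+1) = (m+n)+1 by ring,
      Finset.prod_Icc_succ_top (Nat.le_add_left 1 (m+n)), ih,
      Finset.prod_Icc_succ_top (Nat.le_add_left 1 n), ← mul_assoc,
      show m + n + 1 = m + (n + 1) by ring]

theorem stmt11
    (N : ℕ → ℕ) (B : ℕ → Finset ℤ) (μ : Measure ℝ) (ν : ℕ → Measure ℝ)
    (hcard : ∀ k ≥ 1, 2 ≤ (B k).card) (hcN : ∀ k ≥ 1, (B k).card ≤ N k)
    (hμ : IsInfiniteConv N B μ)
    (hν : ∀ k ≥ 1, IsNuGt N B k (ν k))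
    (htight : IsTightFamily fun k => ν (k + 1)) :
    {ξ : ℝ | ft μ ξ = 0} =
      ⋃ k, ⋃ (_ : 1 ≤ k),
        (fun x : ℝ => (∏ i ∈ Finset.Icc 1 k, (N i : ℝ)) * x) '' {ξ : ℝ | MB (B k) ξ = 0} := by

  have hN1 : ∀ i, 1 ≤ i → 1 ≤ N i := fun i hi =>
    le_trans (by norm_num) (le_trans (hcard i hi) (hcN i hi))
  have hBne : ∀ k, 1 ≤ k → (B k).Nonempty := fun k hk =>
    Finset.card_pos.mp (lt_of_lt_of_le (by norm_num) (hcard k hk))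
  have hcpos : ∀ k, (0:ℝ) < ∏ i ∈ Finset.Icc 1 k, (N i : ℝ) := by
    intro k
    apply Finset.prod_pos
    intro i hi
    exact_mod_cast lt_of_lt_of_le one_pos (hN1 i (Finset.mem_Icc.mp hi).1)
  have hcge : ∀ k, (2:ℝ)^k ≤ ∏ i ∈ Finset.Icc 1 k, (N i : ℝ) := by
    intro k
    have h2 : (2:ℝ)^k = ∏ i ∈ Finset.Icc 1 k, (2:ℝ) := by
      rw [Finset.prod_const, Nat.card_Icc]
      norm_num
    rw [h2]
    apply Finset.prod_le_prod (fun i _ => by norm_num)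
    intro i hi
    exact_mod_cast le_trans (hcard i (Finset.mem_Icc.mp hi).1) (hcN i (Finset.mem_Icc.mp hi).1)
  have hνprob : ∀ k, IsProbabilityMeasure (ν (k+1)) := fun k =>
    (hν (k+1) (Nat.le_add_left 1 k)).1
  ext ξ
  simp only [Set.mem_setOf_eq, Set.mem_iUnion, Set.mem_image]
  constructor
  · intro h0
    by_contra hcon
    push_neg at hcon
    have hMB : ∀ k, 1 ≤ k → MB (B k) (ξ / ∏ i ∈ Finset.Icc 1 k, (N i : ℝ)) ≠ 0 := by
      intro k hk hzero
      refine hcon k hk (ξ / ∏ i ∈ Finset.Icc 1 k, (N i : ℝ)) hzero ?_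
      rw [mul_comm, div_mul_cancel₀ _ (hcpos k).ne']
    have vk0 : ∀ k, ft (ν (k+1)) (ξ / ∏ i ∈ Finset.Icc 1 (k+1), (N i : ℝ)) = 0 := by
      intro k
      set m := k + 1 with hmdef
      have hm : 1 ≤ m := Nat.le_add_left 1 k
      have hshift : IsInfiniteConv (fun j => N (m+j)) (fun j => B (m+j)) (ν m) := hν m hm
      have hBne' : ∀ j, 1 ≤ j → (B (m+j)).Nonempty := fun j hj => hBne (m+j) (by omega)
      have hN1' : ∀ j, 1 ≤ j → 1 ≤ N (m+j) := fun j hj => hN1 (m+j) (by omega)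
      have hTail := tendsto_ft (fun j => N (m+j)) (fun j => B (m+j)) (ν m)
        (fun j hj => hBne' j hj) hshift (ξ / ∏ i ∈ Finset.Icc 1 m, (N i : ℝ))
      have hcm : ∀ j, (∏ i ∈ Finset.Icc 1 (m+j), (N i : ℝ))
          = (∏ i ∈ Finset.Icc 1 m, (N i : ℝ)) * ∏ i ∈ Finset.Icc 1 j, (N (m+i) : ℝ) :=
        fun j => prod_Icc_add' (fun i => (N i : ℝ)) m j
      have hTn : ∀ n, ft (partialConv (fun j => N (m+j)) (fun j => B (m+j)) n)
            (ξ / ∏ i ∈ Finset.Icc 1 m, (N i : ℝ))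
          = ∏ j ∈ Finset.Icc 1 n, MB (B (m+j)) (ξ / ∏ i ∈ Finset.Icc 1 (m+j), (N i : ℝ)) := by
        intro n
        rw [ft_partialConv (fun j => N (m+j)) (fun j => B (m+j))
          (fun j hj => hBne' j hj) (fun j hj => hN1' j hj) _ n]
        apply Finset.prod_congr rfl
        intro j _
        congr 1
        rw [div_div, ← hcm j]
      have hFull : ∀ n, ft (partialConv N B (m+n)) ξ
          = (∏ j ∈ Finset.Icc 1 m, MB (B j) (ξ / ∏ i ∈ Finset.Icc 1 j, (N i : ℝ)))
            * ft (partialConv (fun j => N (m+j)) (fun j => B (m+j)) n)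
              (ξ / ∏ i ∈ Finset.Icc 1 m, (N i : ℝ)) := by
        intro n
        rw [ft_partialConv N B hBne hN1 ξ (m+n), hTn n,
          prod_Icc_add' (fun j => MB (B j) (ξ / ∏ i ∈ Finset.Icc 1 j, (N i : ℝ))) m n]
      have h1 : Tendsto (fun n => ft (partialConv N B (m+n)) ξ) atTop (𝓝 (ft μ ξ)) := by
        have h := (tendsto_ft N B μ hBne hμ ξ).comp (tendsto_add_atTop_nat m)
        simpa only [Function.comp_def, Nat.add_comm] using h
      have h2 : Tendsto (fun n => ft (partialConv N B (m+n)) ξ) atTop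
          (𝓝 ((∏ j ∈ Finset.Icc 1 m, MB (B j) (ξ / ∏ i ∈ Finset.Icc 1 j, (N i : ℝ)))
            * ft (ν m) (ξ / ∏ i ∈ Finset.Icc 1 m, (N i : ℝ)))) := by
        simp only [hFull]
        exact hTail.const_mul _
      have heq := tendsto_nhds_unique h1 h2
      rw [h0] at heq
      have hP : (∏ j ∈ Finset.Icc 1 m, MB (B j) (ξ / ∏ i ∈ Finset.Icc 1 j, (N i : ℝ))) ≠ 0 :=
        Finset.prod_ne_zero_iff.mpr (fun j hj => hMB j (Finset.mem_Icc.mp hj).1)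
      exact (mul_eq_zero.mp heq.symm).resolve_left hP
    have httail := tendsto_ft_tail ν hνprob htight
      (fun k => ∏ i ∈ Finset.Icc 1 k, (N i : ℝ)) hcge hcpos ξ
    have hzero : Tendsto (fun k : ℕ => ft (ν (k+1))
        (ξ / ∏ i ∈ Finset.Icc 1 (k+1), (N i : ℝ))) atTop (𝓝 (0:ℂ)) := by
      simp only [vk0]
      exact tendsto_const_nhds
    exact one_ne_zero (tendsto_nhds_unique httail hzero)
  · rintro ⟨k, hk, x, hx, hcx⟩
    have hck := hcpos k
    have hxx : ξ / ∏ i ∈ Finset.Icc 1 k, (N i : ℝ) = x := by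
      rw [← hcx, mul_comm, mul_div_assoc, div_self hck.ne', mul_one]
    have hlim := tendsto_ft N B μ hBne hμ ξ
    have hzero : Tendsto (fun n => ft (partialConv N B n) ξ) atTop (𝓝 (0:ℂ)) := by
      apply Tendsto.congr' _ (tendsto_const_nhds (x := (0:ℂ)))
      filter_upwards [eventually_ge_atTop k] with n hn
      rw [ft_partialConv N B hBne hN1 ξ n]
      symm
      apply Finset.prod_eq_zero (Finset.mem_Icc.mpr ⟨hk, hn⟩)
      rw [hxx]
      exact hx
    exact tendsto_nhds_unique hlim hzero
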